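/- arXiv:2310.14375 — 2 statements merged into one kernel-verified Lean document; each statement's English description precedes it below -/
import Mathlib

section
/- Let M, a be reals with 0 ≤ a < M, u₀ a real constant, C > 0 a real constant, and let g̃ : (0, π) → ℝ be a C² function of θ. On U, the 2-form F₆ = (u₀/(C sinθ)) dθ ∧ [ √(C² + g̃²) (dt − a sin²θ dφ) + g̃ (ρ²/Δ) dr ] is closed, its current density equals j₆ = (u₀ g̃′/(C ρ² sinθ)) [ (g̃/(Δ√(C²+g̃²))) ((r²+a²)∂_t + a ∂_φ) − ∂_r ] where g̃′ = dg̃/dθ, and F₆ is force-free: F₆_{μν} j₆^ν = 0 on U for all μ. -/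
noncomputable section

/-- Partial derivative of `f` in the coordinate direction `μ`,
coordinates `(x 0, x 1, x 2, x 3) = (t, r, θ, φ)`. -/
def pd (μ : Fin 4) (f : (Fin 4 → ℝ) → ℝ) (x : Fin 4 → ℝ) : ℝ :=
  fderiv ℝ f x (Pi.single μ 1)

/-- ρ² = r² + a² cos²θ. -/
def rho2 (a : ℝ) (x : Fin 4 → ℝ) : ℝ := (x 1) ^ 2 + a ^ 2 * Real.cos (x 2) ^ 2

/-- Δ = r² − 2Mr + a². -/
def Del (M a : ℝ) (x : Fin 4 → ℝ) : ℝ := (x 1) ^ 2 - 2 * M * (x 1) + a ^ 2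

/-- Σ² = (r²+a²)² − Δ a² sin²θ. -/
def Sig2 (M a : ℝ) (x : Fin 4 → ℝ) : ℝ :=
  ((x 1) ^ 2 + a ^ 2) ^ 2 - Del M a x * a ^ 2 * Real.sin (x 2) ^ 2

/-- The Kerr metric in Boyer–Lindquist coordinates `(t, r, θ, φ)`. -/
def kerr (M a : ℝ) (x : Fin 4 → ℝ) : Matrix (Fin 4) (Fin 4) ℝ :=
  Matrix.of fun μ ν =>
    if μ = 0 ∧ ν = 0 then -1 + 2 * M * (x 1) / rho2 a x
    else if (μ = 0 ∧ ν = 3) ∨ (μ = 3 ∧ ν = 0) then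
      -(2 * M * (x 1) * a * Real.sin (x 2) ^ 2) / rho2 a x
    else if μ = 1 ∧ ν = 1 then rho2 a x / Del M a x
    else if μ = 2 ∧ ν = 2 then rho2 a x
    else if μ = 3 ∧ ν = 3 then Sig2 M a x * Real.sin (x 2) ^ 2 / rho2 a x
    else 0

/-- The exterior Kerr domain U = {r > r₊, 0 < θ < π}. -/
def KerrExt (M a : ℝ) : Set (Fin 4 → ℝ) :=
  {x | M + Real.sqrt (M ^ 2 - a ^ 2) < x 1 ∧ 0 < x 2 ∧ x 2 < Real.pi}

/-- `wedge μ ν f` is the antisymmetric matrix of the 2-form `f dx^μ ∧ dx^ν`. -/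
def wedge (μ ν : Fin 4) (f : ℝ) : Matrix (Fin 4) (Fin 4) ℝ :=
  Matrix.of fun i j => if i = μ ∧ j = ν then f else if i = ν ∧ j = μ then -f else 0

/-- A 2-form `F` is closed on `S`: ∂_μ F_{νλ} + ∂_ν F_{λμ} + ∂_λ F_{μν} = 0. -/
def Closed2Form (F : (Fin 4 → ℝ) → Matrix (Fin 4) (Fin 4) ℝ) (S : Set (Fin 4 → ℝ)) : Prop :=
  ∀ x ∈ S, ∀ μ ν lam : Fin 4,
    pd μ (fun y => F y ν lam) x + pd ν (fun y => F y lam μ) x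
      + pd lam (fun y => F y μ ν) x = 0

/-- Current density j^μ = (ρ²sinθ)⁻¹ ∂_ν (ρ²sinθ g^{μα} g^{νβ} F_{αβ}). -/
def current (M a : ℝ) (F : (Fin 4 → ℝ) → Matrix (Fin 4) (Fin 4) ℝ)
    (x : Fin 4 → ℝ) (μ : Fin 4) : ℝ :=
  (rho2 a x * Real.sin (x 2))⁻¹ *
    ∑ ν : Fin 4, pd ν (fun y => rho2 a y * Real.sin (y 2) *
      ∑ i : Fin 4, ∑ j : Fin 4, (kerr M a y)⁻¹ μ i * (kerr M a y)⁻¹ ν j * F y i j) x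

/-- `F` is force-free on `S`: F_{μν} j^ν = 0 for the current density `j` of `F`. -/
def ForceFree (M a : ℝ) (F : (Fin 4 → ℝ) → Matrix (Fin 4) (Fin 4) ℝ)
    (S : Set (Fin 4 → ℝ)) : Prop :=
  ∀ x ∈ S, ∀ μ : Fin 4, ∑ ν : Fin 4, F x μ ν * current M a F x ν = 0

/-- F₆ = (u₀/(C sinθ)) dθ ∧ [ √(C²+g̃²)(dt − a sin²θ dφ) + g̃ (ρ²/Δ) dr ]. -/
def F6 (M a u₀ C : ℝ) (gtil : ℝ → ℝ) (x : Fin 4 → ℝ) : Matrix (Fin 4) (Fin 4) ℝ :=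
  wedge 2 0 (u₀ / (C * Real.sin (x 2)) * Real.sqrt (C ^ 2 + gtil (x 2) ^ 2))
    + wedge 2 3 (u₀ / (C * Real.sin (x 2)) * Real.sqrt (C ^ 2 + gtil (x 2) ^ 2) *
        (-(a * Real.sin (x 2) ^ 2)))
    + wedge 2 1 (u₀ / (C * Real.sin (x 2)) * (gtil (x 2) * rho2 a x / Del M a x))

/-- j₆ = (u₀ g̃′/(C ρ² sinθ)) [ (g̃/(Δ√(C²+g̃²))) ((r²+a²)∂_t + a ∂_φ) − ∂_r ]. -/
def j6 (M a u₀ C : ℝ) (gtil : ℝ → ℝ) (x : Fin 4 → ℝ) : Fin 4 → ℝ := fun μ =>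
  u₀ * deriv gtil (x 2) / (C * rho2 a x * Real.sin (x 2)) *
    ![gtil (x 2) / (Del M a x * Real.sqrt (C ^ 2 + gtil (x 2) ^ 2)) * ((x 1) ^ 2 + a ^ 2),
      -1, 0,
      gtil (x 2) / (Del M a x * Real.sqrt (C ^ 2 + gtil (x 2) ^ 2)) * a] μ

lemma pd_congr {f g : (Fin 4 → ℝ) → ℝ} {x : Fin 4 → ℝ} (h : f =ᶠ[nhds x] g) (μ : Fin 4) :
    pd μ f x = pd μ g x := by
  unfold pd; rw [h.fderiv_eq]

lemma pd_neg {f : (Fin 4 → ℝ) → ℝ} (μ : Fin 4) (x : Fin 4 → ℝ) :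
    pd μ (fun y => -f y) x = -pd μ f x := by
  unfold pd; rw [fderiv_fun_neg]; rfl

lemma pd_const (μ : Fin 4) (x : Fin 4 → ℝ) (c : ℝ) : pd μ (fun _ => c) x = 0 := by
  unfold pd; rw [fderiv_fun_const]; rfl

lemma pd_indep (μ : Fin 4) (f : (Fin 4 → ℝ) → ℝ) (x : Fin 4 → ℝ)
    (hf : ∀ t : ℝ, f (x + t • (Pi.single μ 1 : Fin 4 → ℝ)) = f x) : pd μ f x = 0 := by
  by_cases hd : DifferentiableAt ℝ f x
  · have hc : HasDerivAt (fun t : ℝ => x + t • (Pi.single μ 1 : Fin 4 → ℝ))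
        (Pi.single μ 1) 0 := by
      simpa using ((hasDerivAt_id (0:ℝ)).smul_const (Pi.single μ 1 : Fin 4 → ℝ)).const_add x
    have h1 : HasDerivAt (fun t : ℝ => f (x + t • (Pi.single μ 1 : Fin 4 → ℝ)))
        (fderiv ℝ f x (Pi.single μ 1)) 0 := by
      have hd' : HasFDerivAt f (fderiv ℝ f x) (x + (0:ℝ) • (Pi.single μ 1 : Fin 4 → ℝ)) := by
        simpa using hd.hasFDerivAt
      exact hd'.comp_hasDerivAt 0 hc
    have h2 : HasDerivAt (fun t : ℝ => f (x + t • (Pi.single μ 1 : Fin 4 → ℝ))) 0 0 := by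
      simp_rw [hf]; exact hasDerivAt_const _ _
    exact h1.unique h2
  · unfold pd; rw [fderiv_zero_of_not_differentiableAt hd]; rfl

lemma coord_add_single (μ ν : Fin 4) (hμν : ν ≠ μ) (x : Fin 4 → ℝ) (t : ℝ) :
    (x + t • (Pi.single μ 1 : Fin 4 → ℝ)) ν = x ν := by
  simp [Pi.single_eq_of_ne hμν]

/-- pd in direction μ ≠ 2 of a function of θ only. -/
lemma pdA {μ : Fin 4} (hμ : μ ≠ 2) (f : ℝ → ℝ) (x : Fin 4 → ℝ) :
    pd μ (fun y => f (y 2)) x = 0 := by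
  apply pd_indep
  intro t
  rw [coord_add_single μ 2 (Ne.symm hμ)]

/-- pd in direction μ ∉ {1,2} of a function of (r, θ) only. -/
lemma pdB {μ : Fin 4} (h1 : μ ≠ 1) (h2 : μ ≠ 2) (f : ℝ → ℝ → ℝ) (x : Fin 4 → ℝ) :
    pd μ (fun y => f (y 1) (y 2)) x = 0 := by
  apply pd_indep
  intro t
  rw [coord_add_single μ 1 (Ne.symm h1), coord_add_single μ 2 (Ne.symm h2)]

lemma hasFDerivAt_coord (i : Fin 4) (x : Fin 4 → ℝ) :
    HasFDerivAt (fun y : Fin 4 → ℝ => y i)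
      (ContinuousLinearMap.proj i : (Fin 4 → ℝ) →L[ℝ] ℝ) x :=
  (ContinuousLinearMap.proj (R := ℝ) (φ := fun _ : Fin 4 => ℝ) i).hasFDerivAt

lemma pd2_comp {f : ℝ → ℝ} {f' : ℝ} {x : Fin 4 → ℝ} (hf : HasDerivAt f f' (x 2)) :
    pd 2 (fun y => f (y 2)) x = f' := by
  have h : HasFDerivAt (fun y : Fin 4 → ℝ => f (y 2))
      (f' • (ContinuousLinearMap.proj 2 : (Fin 4 → ℝ) →L[ℝ] ℝ)) x :=
    hf.comp_hasFDerivAt x (hasFDerivAt_coord 2 x)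
  unfold pd; rw [h.fderiv]
  simp

lemma pd2_mul {h f : ℝ → ℝ} {h' f' : ℝ} {x : Fin 4 → ℝ}
    (hh : HasDerivAt h h' (x 1)) (hf : HasDerivAt f f' (x 2)) :
    pd 2 (fun y => h (y 1) * f (y 2)) x = h (x 1) * f' := by
  have H1 : HasFDerivAt (fun y : Fin 4 → ℝ => h (y 1))
      (h' • (ContinuousLinearMap.proj 1 : (Fin 4 → ℝ) →L[ℝ] ℝ)) x :=
    hh.comp_hasFDerivAt x (hasFDerivAt_coord 1 x)
  have H2 : HasFDerivAt (fun y : Fin 4 → ℝ => f (y 2))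
      (f' • (ContinuousLinearMap.proj 2 : (Fin 4 → ℝ) →L[ℝ] ℝ)) x :=
    hf.comp_hasFDerivAt x (hasFDerivAt_coord 2 x)
  have H := H1.mul H2
  unfold pd; rw [show (fun y : Fin 4 → ℝ => h (y 1) * f (y 2)) = ((fun y : Fin 4 → ℝ => h (y 1)) * fun y => f (y 2)) from rfl, H.fderiv]
  simp [Pi.single_eq_of_ne (show (1:Fin 4) ≠ 2 by decide)]

/-- Explicit inverse Kerr metric. -/
def kerrInv (M a : ℝ) (x : Fin 4 → ℝ) : Matrix (Fin 4) (Fin 4) ℝ :=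
  Matrix.of fun μ ν =>
    if μ = 0 ∧ ν = 0 then -(Sig2 M a x) / (rho2 a x * Del M a x)
    else if (μ = 0 ∧ ν = 3) ∨ (μ = 3 ∧ ν = 0) then
      -(2 * M * (x 1) * a) / (rho2 a x * Del M a x)
    else if μ = 1 ∧ ν = 1 then Del M a x / rho2 a x
    else if μ = 2 ∧ ν = 2 then (rho2 a x)⁻¹
    else if μ = 3 ∧ ν = 3 then
      (Del M a x - a ^ 2 * Real.sin (x 2) ^ 2) / (Del M a x * rho2 a x * Real.sin (x 2) ^ 2)
    else 0

lemma hr_pos {M a : ℝ} (ha : 0 ≤ a) (haM : a < M) {x : Fin 4 → ℝ} (hx : x ∈ KerrExt M a) :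
    0 < x 1 := by
  have h := hx.1
  have h2 : (0:ℝ) ≤ Real.sqrt (M ^ 2 - a ^ 2) := Real.sqrt_nonneg _
  linarith

lemma del_pos {M a : ℝ} (ha : 0 ≤ a) (haM : a < M) {x : Fin 4 → ℝ} (hx : x ∈ KerrExt M a) :
    0 < Del M a x := by
  have h1 : Real.sqrt (M ^ 2 - a ^ 2) < x 1 - M := by
    have := hx.1; linarith
  have h0 : (0:ℝ) ≤ M ^ 2 - a ^ 2 := by nlinarith
  have h2 : M ^ 2 - a ^ 2 < (x 1 - M) ^ 2 := by
    have hnn := Real.sqrt_nonneg (M ^ 2 - a ^ 2)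
    nlinarith [Real.sq_sqrt h0]
  unfold Del; nlinarith

lemma rho2_pos {M a : ℝ} (ha : 0 ≤ a) (haM : a < M) {x : Fin 4 → ℝ} (hx : x ∈ KerrExt M a) :
    0 < rho2 a x := by
  have := hr_pos ha haM hx
  unfold rho2; positivity

lemma sinx_pos {M a : ℝ} {x : Fin 4 → ℝ} (hx : x ∈ KerrExt M a) : 0 < Real.sin (x 2) :=
  Real.sin_pos_of_pos_of_lt_pi hx.2.1 hx.2.2

set_option maxHeartbeats 2000000 in
lemma kerr_mul_inv {M a : ℝ} (ha : 0 ≤ a) (haM : a < M) {x : Fin 4 → ℝ}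
    (hx : x ∈ KerrExt M a) : kerr M a x * kerrInv M a x = 1 := by
  have hρ : rho2 a x ≠ 0 := ne_of_gt (rho2_pos ha haM hx)
  have hΔ : Del M a x ≠ 0 := ne_of_gt (del_pos ha haM hx)
  have hs : Real.sin (x 2) ≠ 0 := ne_of_gt (sinx_pos hx)
  have hρ' : (x 1) ^ 2 + a ^ 2 * (1 - Real.sin (x 2) ^ 2) ≠ 0 := by
    rw [← Real.cos_sq']; exact hρ
  have hΔ' : (x 1) ^ 2 - 2 * M * (x 1) + a ^ 2 ≠ 0 := hΔ
  ext i j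
  rw [Matrix.mul_apply, Fin.sum_univ_four]
  fin_cases i <;> fin_cases j <;>
    simp (config := { decide := true }) only [kerr, kerrInv, Matrix.of_apply,
      Matrix.one_apply, if_true, if_false] <;>
    field_simp <;>
    (try simp only [Sig2, Del, rho2, Real.cos_sq']) <;>
    ring

lemma kerr_inv_eq {M a : ℝ} (ha : 0 ≤ a) (haM : a < M) {x : Fin 4 → ℝ}
    (hx : x ∈ KerrExt M a) : (kerr M a x)⁻¹ = kerrInv M a x :=
  Matrix.inv_eq_right_inv (kerr_mul_inv ha haM hx)
/-- Explicit densitized contravariant components ρ²sinθ F^{μν} of F₆. -/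
def densF (M a u₀ C : ℝ) (gtil : ℝ → ℝ) (μ ν : Fin 4) : (Fin 4 → ℝ) → ℝ :=
  if μ = 0 ∧ ν = 2 then fun y =>
    (u₀ / C * ((y 1) ^ 2 + a ^ 2) / Del M a y) * Real.sqrt (C ^ 2 + gtil (y 2) ^ 2)
  else if μ = 2 ∧ ν = 0 then fun y =>
    -((u₀ / C * ((y 1) ^ 2 + a ^ 2) / Del M a y) * Real.sqrt (C ^ 2 + gtil (y 2) ^ 2))
  else if μ = 3 ∧ ν = 2 then fun y =>
    (u₀ / C * a / Del M a y) * Real.sqrt (C ^ 2 + gtil (y 2) ^ 2)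
  else if μ = 2 ∧ ν = 3 then fun y =>
    -((u₀ / C * a / Del M a y) * Real.sqrt (C ^ 2 + gtil (y 2) ^ 2))
  else if μ = 2 ∧ ν = 1 then fun y => u₀ / C * gtil (y 2)
  else if μ = 1 ∧ ν = 2 then fun y => -(u₀ / C * gtil (y 2))
  else fun _ => 0

set_option maxHeartbeats 4000000 in
lemma dens_eq {M a u₀ C : ℝ} (gtil : ℝ → ℝ) {y : Fin 4 → ℝ}
    (hρ : rho2 a y ≠ 0) (hΔ : Del M a y ≠ 0) (hs : Real.sin (y 2) ≠ 0) (hC : C ≠ 0)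
    (μ ν : Fin 4) :
    rho2 a y * Real.sin (y 2) *
      ∑ i : Fin 4, ∑ j : Fin 4, kerrInv M a y μ i * kerrInv M a y ν j * F6 M a u₀ C gtil y i j
    = densF M a u₀ C gtil μ ν y := by
  fin_cases μ <;> fin_cases ν <;>
    simp only [Fin.sum_univ_four] <;>
    simp (config := { decide := true }) only [densF, kerrInv, F6, wedge, Matrix.add_apply,
      Matrix.of_apply, if_true, if_false] <;>
    (try field_simp) <;>
    (try simp only [Sig2, Del, rho2, Real.cos_sq']) <;>
    (try ring)

lemma isOpen_kerrExt (M a : ℝ) : IsOpen (KerrExt M a) := by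
  have h1 : IsOpen {x : Fin 4 → ℝ | M + Real.sqrt (M ^ 2 - a ^ 2) < x 1} :=
    isOpen_lt continuous_const (continuous_apply 1)
  have h2 : IsOpen {x : Fin 4 → ℝ | 0 < x 2} := isOpen_lt continuous_const (continuous_apply 2)
  have h3 : IsOpen {x : Fin 4 → ℝ | x 2 < Real.pi} :=
    isOpen_lt (continuous_apply 2) continuous_const
  exact (h1.inter (h2.inter h3))

set_option maxHeartbeats 4000000 in
theorem closed_part (M a u₀ C : ℝ) (gtil : ℝ → ℝ) :
    Closed2Form (F6 M a u₀ C gtil) (KerrExt M a) := by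
  intro x hx μ ν lam
  have zA : ∀ μ : Fin 4, μ ≠ 2 →
      pd μ (fun y => u₀ / (C * Real.sin (y 2)) * Real.sqrt (C ^ 2 + gtil (y 2) ^ 2)) x = 0 :=
    fun μ h => pdA h (fun θ => u₀ / (C * Real.sin θ) * Real.sqrt (C ^ 2 + gtil θ ^ 2)) x
  have zD : ∀ μ : Fin 4, μ ≠ 2 →
      pd μ (fun y => u₀ / (C * Real.sin (y 2)) * Real.sqrt (C ^ 2 + gtil (y 2) ^ 2) *
        (a * Real.sin (y 2) ^ 2)) x = 0 :=
    fun μ h => pdA h (fun θ => u₀ / (C * Real.sin θ) * Real.sqrt (C ^ 2 + gtil θ ^ 2) *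
      (a * Real.sin θ ^ 2)) x
  have zB : ∀ μ : Fin 4, μ ≠ 1 → μ ≠ 2 →
      pd μ (fun y => u₀ / (C * Real.sin (y 2)) *
        (gtil (y 2) * ((y 1) ^ 2 + a ^ 2 * Real.cos (y 2) ^ 2) /
          ((y 1) ^ 2 - 2 * M * (y 1) + a ^ 2))) x = 0 :=
    fun μ h1 h2 => pdB h1 h2 (fun p q => u₀ / (C * Real.sin q) *
      (gtil q * (p ^ 2 + a ^ 2 * Real.cos q ^ 2) / (p ^ 2 - 2 * M * p + a ^ 2))) x
  have zA0 := zA 0 (by decide); have zA1 := zA 1 (by decide); have zA3 := zA 3 (by decide)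
  have zD0 := zD 0 (by decide); have zD1 := zD 1 (by decide); have zD3 := zD 3 (by decide)
  have zB0 := zB 0 (by decide) (by decide); have zB3 := zB 3 (by decide) (by decide)
  have h4 : ∀ i : Fin 4, i = 0 ∨ i = 1 ∨ i = 2 ∨ i = 3 := by decide
  rcases h4 μ with rfl|rfl|rfl|rfl <;> rcases h4 ν with rfl|rfl|rfl|rfl <;>
    rcases h4 lam with rfl|rfl|rfl|rfl <;>
    simp (config := { decide := true }) only [F6, wedge, Matrix.add_apply, Matrix.of_apply,
      if_true, if_false, add_zero, zero_add, neg_zero, neg_neg, mul_neg, neg_mul, rho2, Del, pd_neg, pd_const,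
      zA0, zA1, zA3, zD0, zD1, zD3, zB0, zB3] <;>
    ring

set_option maxHeartbeats 4000000 in
/-- F₆ is closed, its current density is j₆, and F₆ is force-free. -/
theorem kerr_F6_forcefree (M a u₀ C : ℝ) (ha : 0 ≤ a) (haM : a < M) (hC : 0 < C)
    (gtil : ℝ → ℝ) (hg : ContDiffOn ℝ 2 gtil (Set.Ioo 0 Real.pi)) :
    Closed2Form (F6 M a u₀ C gtil) (KerrExt M a) ∧
    (∀ x ∈ KerrExt M a, ∀ μ : Fin 4,
      current M a (F6 M a u₀ C gtil) x μ = j6 M a u₀ C gtil x μ) ∧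
    ForceFree M a (F6 M a u₀ C gtil) (KerrExt M a) := by
  have hC' : C ≠ 0 := ne_of_gt hC
  have part2 : ∀ x ∈ KerrExt M a, ∀ μ : Fin 4,
      current M a (F6 M a u₀ C gtil) x μ = j6 M a u₀ C gtil x μ := by
    intro x hx μ
    have hρ : rho2 a x ≠ 0 := ne_of_gt (rho2_pos ha haM hx)
    have hΔ : Del M a x ≠ 0 := ne_of_gt (del_pos ha haM hx)
    have hs : Real.sin (x 2) ≠ 0 := ne_of_gt (sinx_pos hx)
    have hq : (0:ℝ) < C ^ 2 + gtil (x 2) ^ 2 := by positivity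
    have hsq : Real.sqrt (C ^ 2 + gtil (x 2) ^ 2) ≠ 0 :=
      ne_of_gt (Real.sqrt_pos.mpr hq)
    have hθ : x 2 ∈ Set.Ioo 0 Real.pi := ⟨hx.2.1, hx.2.2⟩
    have hgd : HasDerivAt gtil (deriv gtil (x 2)) (x 2) := by
      have hdiff : DifferentiableAt ℝ gtil (x 2) :=
        (hg.differentiableOn (by norm_num)).differentiableAt (isOpen_Ioo.mem_nhds hθ)
      exact hdiff.hasDerivAt
    have hQ : HasDerivAt (fun θ => Real.sqrt (C ^ 2 + gtil θ ^ 2))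
        (gtil (x 2) * deriv gtil (x 2) / Real.sqrt (C ^ 2 + gtil (x 2) ^ 2)) (x 2) := by
      have hin : HasDerivAt (fun θ => C ^ 2 + gtil θ ^ 2) (2 * gtil (x 2) * deriv gtil (x 2))
          (x 2) := by
        have h2 := (hgd.pow 2).const_add (C ^ 2)
        simpa [mul_comm, mul_assoc] using h2
      have hcomp := (Real.hasDerivAt_sqrt (ne_of_gt hq)).comp (x 2) hin
      exact hcomp.congr_deriv (by field_simp)
    have heq : ∀ ν : Fin 4, pd ν (fun y => rho2 a y * Real.sin (y 2) *
        ∑ i : Fin 4, ∑ j : Fin 4,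
          (kerr M a y)⁻¹ μ i * (kerr M a y)⁻¹ ν j * F6 M a u₀ C gtil y i j) x
        = pd ν (densF M a u₀ C gtil μ ν) x := by
      intro ν
      apply pd_congr
      filter_upwards [(isOpen_kerrExt M a).mem_nhds hx] with y hy
      rw [kerr_inv_eq ha haM hy]
      exact dens_eq gtil (ne_of_gt (rho2_pos ha haM hy)) (ne_of_gt (del_pos ha haM hy))
        (ne_of_gt (sinx_pos hy)) hC' μ ν
    have hcur : current M a (F6 M a u₀ C gtil) x μ = (rho2 a x * Real.sin (x 2))⁻¹ *
        (pd 0 (densF M a u₀ C gtil μ 0) x + pd 1 (densF M a u₀ C gtil μ 1) x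
         + pd 2 (densF M a u₀ C gtil μ 2) x + pd 3 (densF M a u₀ C gtil μ 3) x) := by
      unfold current
      rw [Fin.sum_univ_four, heq 0, heq 1, heq 2, heq 3]
    rw [hcur]
    have hh1 : DifferentiableAt ℝ
        (fun t : ℝ => u₀ / C * (t ^ 2 + a ^ 2) / (t ^ 2 - 2 * M * t + a ^ 2)) (x 1) :=
      DifferentiableAt.div (by fun_prop) (by fun_prop) hΔ
    have hh2 : DifferentiableAt ℝ
        (fun t : ℝ => u₀ / C * a / (t ^ 2 - 2 * M * t + a ^ 2)) (x 1) :=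
      DifferentiableAt.div (by fun_prop) (by fun_prop) hΔ
    have h4 : ∀ i : Fin 4, i = 0 ∨ i = 1 ∨ i = 2 ∨ i = 3 := by decide
    rcases h4 μ with rfl|rfl|rfl|rfl
    · -- μ = 0
      have p0 : pd 0 (densF M a u₀ C gtil 0 0) x = 0 := pd_const 0 x 0
      have p1 : pd 1 (densF M a u₀ C gtil 0 1) x = 0 := pd_const 1 x 0
      have p3 : pd 3 (densF M a u₀ C gtil 0 3) x = 0 := pd_const 3 x 0
      have p2 : pd 2 (densF M a u₀ C gtil 0 2) x
          = u₀ / C * ((x 1) ^ 2 + a ^ 2) / ((x 1) ^ 2 - 2 * M * (x 1) + a ^ 2)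
            * (gtil (x 2) * deriv gtil (x 2) / Real.sqrt (C ^ 2 + gtil (x 2) ^ 2)) :=
        pd2_mul hh1.hasDerivAt hQ
      rw [p0, p1, p2, p3]
      show _ = j6 M a u₀ C gtil x 0
      have hΔ' : (x 1) ^ 2 - 2 * M * (x 1) + a ^ 2 ≠ 0 := hΔ
      simp only [j6, Matrix.cons_val_zero]
      rw [show Del M a x = (x 1) ^ 2 - 2 * M * (x 1) + a ^ 2 from rfl]
      field_simp
      ring
    · -- μ = 1
      have p0 : pd 0 (densF M a u₀ C gtil 1 0) x = 0 := pd_const 0 x 0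
      have p1 : pd 1 (densF M a u₀ C gtil 1 1) x = 0 := pd_const 1 x 0
      have p3 : pd 3 (densF M a u₀ C gtil 1 3) x = 0 := pd_const 3 x 0
      have p2 : pd 2 (densF M a u₀ C gtil 1 2) x = -(u₀ / C * deriv gtil (x 2)) :=
        pd2_comp ((hgd.const_mul (u₀ / C)).neg)
      rw [p0, p1, p2, p3]
      show _ = j6 M a u₀ C gtil x 1
      simp only [j6, Matrix.cons_val_one, Matrix.head_cons, Matrix.cons_val_zero]
      field_simp
      try ring
      try tauto
    · -- μ = 2
      have p0 : pd 0 (densF M a u₀ C gtil 2 0) x = 0 :=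
        pdB (by decide) (by decide) (fun p q =>
          -(u₀ / C * (p ^ 2 + a ^ 2) / (p ^ 2 - 2 * M * p + a ^ 2) *
            Real.sqrt (C ^ 2 + gtil q ^ 2))) x
      have p1 : pd 1 (densF M a u₀ C gtil 2 1) x = 0 :=
        pdA (by decide) (fun θ => u₀ / C * gtil θ) x
      have p2 : pd 2 (densF M a u₀ C gtil 2 2) x = 0 := pd_const 2 x 0
      have p3 : pd 3 (densF M a u₀ C gtil 2 3) x = 0 :=
        pdB (by decide) (by decide) (fun p q =>
          -(u₀ / C * a / (p ^ 2 - 2 * M * p + a ^ 2) *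
            Real.sqrt (C ^ 2 + gtil q ^ 2))) x
      rw [p0, p1, p2, p3]
      show _ = j6 M a u₀ C gtil x 2
      simp [j6]
    · -- μ = 3
      have p0 : pd 0 (densF M a u₀ C gtil 3 0) x = 0 := pd_const 0 x 0
      have p1 : pd 1 (densF M a u₀ C gtil 3 1) x = 0 := pd_const 1 x 0
      have p3 : pd 3 (densF M a u₀ C gtil 3 3) x = 0 := pd_const 3 x 0
      have p2 : pd 2 (densF M a u₀ C gtil 3 2) x
          = u₀ / C * a / ((x 1) ^ 2 - 2 * M * (x 1) + a ^ 2)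
            * (gtil (x 2) * deriv gtil (x 2) / Real.sqrt (C ^ 2 + gtil (x 2) ^ 2)) :=
        pd2_mul hh2.hasDerivAt hQ
      rw [p0, p1, p2, p3]
      show _ = j6 M a u₀ C gtil x 3
      have hΔ' : (x 1) ^ 2 - 2 * M * (x 1) + a ^ 2 ≠ 0 := hΔ
      have hv3 : (![gtil (x 2) / (Del M a x * Real.sqrt (C ^ 2 + gtil (x 2) ^ 2)) * ((x 1) ^ 2 + a ^ 2),
          -1, 0, gtil (x 2) / (Del M a x * Real.sqrt (C ^ 2 + gtil (x 2) ^ 2)) * a] : Fin 4 → ℝ) 3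
          = gtil (x 2) / (Del M a x * Real.sqrt (C ^ 2 + gtil (x 2) ^ 2)) * a := by simp
      simp only [j6, hv3]
      rw [show Del M a x = (x 1) ^ 2 - 2 * M * (x 1) + a ^ 2 from rfl]
      field_simp
      ring
  refine ⟨closed_part M a u₀ C gtil, part2, ?_⟩
  intro x hx μ
  have hj := part2 x hx
  have hρ : rho2 a x ≠ 0 := ne_of_gt (rho2_pos ha haM hx)
  have hΔ : Del M a x ≠ 0 := ne_of_gt (del_pos ha haM hx)
  have hs : Real.sin (x 2) ≠ 0 := ne_of_gt (sinx_pos hx)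
  have hq : (0:ℝ) < C ^ 2 + gtil (x 2) ^ 2 := by positivity
  have hsq : Real.sqrt (C ^ 2 + gtil (x 2) ^ 2) ≠ 0 := ne_of_gt (Real.sqrt_pos.mpr hq)
  have hΔ' : (x 1) ^ 2 - 2 * M * (x 1) + a ^ 2 ≠ 0 := hΔ
  have hρ' : (x 1) ^ 2 + a ^ 2 * (1 - Real.sin (x 2) ^ 2) ≠ 0 := by
    rw [← Real.cos_sq']; exact hρ
  rw [Fin.sum_univ_four, hj 0, hj 1, hj 2, hj 3]
  have h4 : ∀ i : Fin 4, i = 0 ∨ i = 1 ∨ i = 2 ∨ i = 3 := by decide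
  rcases h4 μ with rfl|rfl|rfl|rfl <;>
    simp (config := { decide := true }) only [F6, wedge, Matrix.add_apply, Matrix.of_apply,
      if_true, if_false, add_zero, zero_add, j6, Matrix.cons_val_zero, Matrix.cons_val_one,
      Matrix.head_cons] <;>
    [skip; skip; skip; skip] <;>
    first
      | (simp
         done)
      | (have hv2 : (![gtil (x 2) / (Del M a x * Real.sqrt (C ^ 2 + gtil (x 2) ^ 2)) * ((x 1) ^ 2 + a ^ 2),
             -1, 0, gtil (x 2) / (Del M a x * Real.sqrt (C ^ 2 + gtil (x 2) ^ 2)) * a] : Fin 4 → ℝ) 2 = 0 := by simp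
         have hv3 : (![gtil (x 2) / (Del M a x * Real.sqrt (C ^ 2 + gtil (x 2) ^ 2)) * ((x 1) ^ 2 + a ^ 2),
             -1, 0, gtil (x 2) / (Del M a x * Real.sqrt (C ^ 2 + gtil (x 2) ^ 2)) * a] : Fin 4 → ℝ) 3
             = gtil (x 2) / (Del M a x * Real.sqrt (C ^ 2 + gtil (x 2) ^ 2)) * a := by simp
         simp only [hv2, hv3]
         simp only [rho2, Del, Real.cos_sq']
         field_simp
         ring)
end
end

section
/- Let M, a be reals with 0 ≤ a < M, u₀ a real constant, C > 0, and g̃ : (0, π) → ℝ a C² function of θ. Let F₆ = (u₀/(C sinθ)) dθ ∧ [ √(C² + g̃²) (dt − a sin²θ dφ) + g̃ (ρ²/Δ) dr ] and j₆ = (u₀ g̃′/(C ρ² sinθ)) [ (g̃/(Δ√(C²+g̃²))) ((r²+a²)∂_t + a ∂_φ) − ∂_r ] on U. Then on U: F₆² := g^{μα}g^{νβ}F₆_{αβ}F₆_{μν} = −2u₀²/(Δ sin²θ) (so F₆ is electrically dominated, F₆² < 0 when u₀ ≠ 0), and j₆² := g_{μν} j₆^μ j₆^ν = u₀² g̃′²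 / ((g̃² + C²) Δ ρ² sin²θ) ≥ 0 (so the current density is spacelike wherever g̃′ ≠ 0). -/
noncomputable section

/-- The invariant F² = g^{μα} g^{νβ} F_{αβ} F_{μν}. -/
def Fsq (M a : ℝ) (F : (Fin 4 → ℝ) → Matrix (Fin 4) (Fin 4) ℝ) (x : Fin 4 → ℝ) : ℝ :=
  ∑ μ : Fin 4, ∑ ν : Fin 4, ∑ i : Fin 4, ∑ j : Fin 4,
    (kerr M a x)⁻¹ μ i * (kerr M a x)⁻¹ ν j * F x i j * F x μ ν

def ginv (M a : ℝ) (x : Fin 4 → ℝ) : Matrix (Fin 4) (Fin 4) ℝ :=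
  Matrix.of fun μ ν =>
    if μ = 0 ∧ ν = 0 then -(Sig2 M a x) / (rho2 a x * Del M a x)
    else if (μ = 0 ∧ ν = 3) ∨ (μ = 3 ∧ ν = 0) then
      -(2 * M * (x 1) * a) / (rho2 a x * Del M a x)
    else if μ = 1 ∧ ν = 1 then Del M a x / rho2 a x
    else if μ = 2 ∧ ν = 2 then 1 / rho2 a x
    else if μ = 3 ∧ ν = 3 then
      (Del M a x - a ^ 2 * Real.sin (x 2) ^ 2) / (rho2 a x * Del M a x * Real.sin (x 2) ^ 2)
    else 0

lemma kerr_pos (M a : ℝ) (ha : 0 ≤ a) (haM : a < M) {x : Fin 4 → ℝ} (hx : x ∈ KerrExt M a) :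
    0 < Del M a x ∧ 0 < rho2 a x ∧ 0 < Real.sin (x 2) := by
  obtain ⟨hr, hθ1, hθ2⟩ := hx
  have hsq : Real.sqrt (M ^ 2 - a ^ 2) ^ 2 = M ^ 2 - a ^ 2 :=
    Real.sq_sqrt (by nlinarith)
  have h0 : (0:ℝ) ≤ Real.sqrt (M ^ 2 - a ^ 2) := Real.sqrt_nonneg _
  have hrM : M < x 1 := by nlinarith
  have hΔ : 0 < Del M a x := by
    have : Real.sqrt (M ^ 2 - a ^ 2) < x 1 - M := by linarith
    have h2 : M ^ 2 - a ^ 2 < (x 1 - M) ^ 2 := by nlinarith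
    unfold Del; nlinarith
  refine ⟨hΔ, ?_, Real.sin_pos_of_pos_of_lt_pi hθ1 hθ2⟩
  have : 0 < x 1 := by nlinarith
  unfold rho2; nlinarith [sq_nonneg (a * Real.cos (x 2))]

lemma kerr_inv (M a : ℝ) {x : Fin 4 → ℝ} (hΔ : 0 < Del M a x) (hρ : 0 < rho2 a x)
    (hs : 0 < Real.sin (x 2)) : (kerr M a x)⁻¹ = ginv M a x := by
  have hΔ' := hΔ.ne'
  have hρ' := hρ.ne'
  have hs' := hs.ne'
  have hc : Real.cos (x 2) ^ 2 = 1 - Real.sin (x 2) ^ 2 := Real.cos_sq' _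
  have hΔ3 : x 1 * (x 1 - 2 * M) + a ^ 2 ≠ 0 := by
    intro h; apply hΔ'; simp only [Del]; linarith
  apply Matrix.inv_eq_right_inv
  ext i j
  simp only [Del, rho2, Sig2] at hΔ' hρ' ⊢
  fin_cases i <;> fin_cases j <;>
    simp [kerr, ginv, Matrix.mul_apply, Fin.sum_univ_four, Matrix.one_apply,
      Del, rho2, Sig2, hc] <;>
    (rw [hc] at hρ') <;> field_simp <;> ring
set_option maxHeartbeats 2000000 in
/-- F₆² = −2u₀²/(Δ sin²θ) (electrically dominated) and
j₆² = u₀² g̃′²/((g̃²+C²) Δ ρ² sin²θ) ≥ 0 (spacelike current). -/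
theorem kerr_F6_invariants (M a u₀ C : ℝ) (ha : 0 ≤ a) (haM : a < M) (hC : 0 < C)
    (gtil : ℝ → ℝ) (hg : ContDiffOn ℝ 2 gtil (Set.Ioo 0 Real.pi)) :
    ∀ x ∈ KerrExt M a,
      Fsq M a (F6 M a u₀ C gtil) x = -2 * u₀ ^ 2 / (Del M a x * Real.sin (x 2) ^ 2) ∧
      (u₀ ≠ 0 → Fsq M a (F6 M a u₀ C gtil) x < 0) ∧
      (∑ μ : Fin 4, ∑ ν : Fin 4,
          kerr M a x μ ν * j6 M a u₀ C gtil x μ * j6 M a u₀ C gtil x ν)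
        = u₀ ^ 2 * (deriv gtil (x 2)) ^ 2 /
            ((gtil (x 2) ^ 2 + C ^ 2) * Del M a x * rho2 a x * Real.sin (x 2) ^ 2) ∧
      0 ≤ (∑ μ : Fin 4, ∑ ν : Fin 4,
          kerr M a x μ ν * j6 M a u₀ C gtil x μ * j6 M a u₀ C gtil x ν) := by
  intro x hx
  obtain ⟨hΔ, hρ, hs⟩ := kerr_pos M a ha haM hx
  have hinv := kerr_inv M a hΔ hρ hs
  have hΔ' := hΔ.ne'
  have hρ' := hρ.ne'
  have hs' := hs.ne'
  have hC' := hC.ne'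
  have hS0 : (0:ℝ) < C ^ 2 + gtil (x 2) ^ 2 := by positivity
  have hS2 : Real.sqrt (C ^ 2 + gtil (x 2) ^ 2) ^ 2 = C ^ 2 + gtil (x 2) ^ 2 :=
    Real.sq_sqrt hS0.le
  have hS : 0 < Real.sqrt (C ^ 2 + gtil (x 2) ^ 2) := Real.sqrt_pos.mpr hS0
  have hS' := hS.ne'
  have hc : Real.cos (x 2) ^ 2 = 1 - Real.sin (x 2) ^ 2 := Real.cos_sq' _
  have hP : rho2 a x = (x 1) ^ 2 + a ^ 2 - a ^ 2 * Real.sin (x 2) ^ 2 := by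
    simp only [rho2, hc]; ring
  set E := u₀ / (C * Real.sin (x 2)) * Real.sqrt (C ^ 2 + gtil (x 2) ^ 2) with hE
  set f3 := E * (-(a * Real.sin (x 2) ^ 2)) with hf3
  set b := u₀ / (C * Real.sin (x 2)) * (gtil (x 2) * rho2 a x / Del M a x) with hb
  set G00 := -(Sig2 M a x) / (rho2 a x * Del M a x) with hG00
  set G03 := -(2 * M * (x 1) * a) / (rho2 a x * Del M a x) with hG03
  set G11 := Del M a x / rho2 a x with hG11
  set G33 := (Del M a x - a ^ 2 * Real.sin (x 2) ^ 2) /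
      (rho2 a x * Del M a x * Real.sin (x 2) ^ 2) with hG33
  have hF : F6 M a u₀ C gtil x =
      !![0, 0, -E, 0; 0, 0, -b, 0; E, b, 0, f3; 0, 0, -f3, 0] := by
    ext i j
    fin_cases i <;> fin_cases j <;>
      simp [F6, wedge, hE, hf3, hb, Matrix.vecHead, Matrix.vecTail]
  have hG : ginv M a x =
      !![G00, 0, 0, G03; 0, G11, 0, 0; 0, 0, 1 / rho2 a x, 0; G03, 0, 0, G33] := by
    ext i j
    fin_cases i <;> fin_cases j <;> simp [ginv, Matrix.vecHead, Matrix.vecTail, hG00, hG03, hG11, hG33]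
  -- F² computation
  have hX : G00 * E + G03 * f3 = -(((x 1) ^ 2 + a ^ 2) / Del M a x) * E := by
    rw [hG00, hG03, hf3]
    simp only [Sig2, Del, rho2, hc] at hΔ' hρ' ⊢
    field_simp
    ring
  have hY : G03 * E + G33 * f3 = -(a / Del M a x) * E := by
    rw [hG03, hG33, hf3]
    simp only [Sig2, Del, rho2, hc] at hΔ' hρ' ⊢
    field_simp
    ring
  have hFsq : Fsq M a (F6 M a u₀ C gtil) x =
      2 * (1 / rho2 a x) * ((G00 * E + G03 * f3) * E + (G03 * E + G33 * f3) * f3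
        + G11 * b ^ 2) := by
    simp only [Fsq, hinv, hG, hF, Fin.sum_univ_four, Matrix.cons_val', Matrix.cons_val_zero,
      Matrix.cons_val_one, Matrix.head_cons, Matrix.empty_val', Matrix.cons_val_fin_one,
      Matrix.head_fin_const, Matrix.cons_val_two, Matrix.tail_cons, Matrix.cons_val_three,
      Matrix.of_apply, mul_zero, zero_mul, add_zero, zero_add, neg_zero, mul_neg, neg_neg]
    ring
  have h1 : Fsq M a (F6 M a u₀ C gtil) x
      = -2 * u₀ ^ 2 / (Del M a x * Real.sin (x 2) ^ 2) := by
    rw [hFsq, hX, hY, hf3]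
    have hE2 : E ^ 2 = u₀ ^ 2 * (C ^ 2 + gtil (x 2) ^ 2) / (C ^ 2 * Real.sin (x 2) ^ 2) := by
      rw [hE, mul_pow, hS2]; ring
    rw [show (-(((x 1) ^ 2 + a ^ 2) / Del M a x) * E) * E
        + (-(a / Del M a x) * E) * (E * (-(a * Real.sin (x 2) ^ 2)))
        + G11 * b ^ 2
        = (-(((x 1) ^ 2 + a ^ 2) / Del M a x) + a ^ 2 * Real.sin (x 2) ^ 2 / Del M a x) * E ^ 2
          + G11 * b ^ 2 by ring]
    rw [hE2, hb, hG11, hP]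
    rw [hP] at hρ'
    field_simp
    ring
  -- j² computation
  set K := u₀ * deriv gtil (x 2) / (C * rho2 a x * Real.sin (x 2)) with hK
  set α := gtil (x 2) / (Del M a x * Real.sqrt (C ^ 2 + gtil (x 2) ^ 2)) with hα
  set g00 := -1 + 2 * M * (x 1) / rho2 a x with hg00
  set g03 := -(2 * M * (x 1) * a * Real.sin (x 2) ^ 2) / rho2 a x with hg03
  set g33 := Sig2 M a x * Real.sin (x 2) ^ 2 / rho2 a x with hg33
  have hKm : kerr M a x =
      !![g00, 0, 0, g03; 0, rho2 a x / Del M a x, 0, 0; 0, 0, rho2 a x, 0;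
        g03, 0, 0, g33] := by
    ext i j
    fin_cases i <;> fin_cases j <;> simp [kerr, Matrix.vecHead, Matrix.vecTail, hg00, hg03, hg33]
  have hT : g00 * ((x 1) ^ 2 + a ^ 2) ^ 2 + 2 * g03 * ((x 1) ^ 2 + a ^ 2) * a
      + g33 * a ^ 2 = -(Del M a x) * rho2 a x := by
    rw [hg00, hg03, hg33]
    simp only [Sig2, Del, rho2, hc] at hρ' ⊢
    field_simp
    ring
  have hsum : (∑ μ : Fin 4, ∑ ν : Fin 4,
        kerr M a x μ ν * j6 M a u₀ C gtil x μ * j6 M a u₀ C gtil x ν)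
      = K ^ 2 * (α ^ 2 * (g00 * ((x 1) ^ 2 + a ^ 2) ^ 2
          + 2 * g03 * ((x 1) ^ 2 + a ^ 2) * a + g33 * a ^ 2)
        + rho2 a x / Del M a x) := by
    simp only [hKm, j6, Fin.sum_univ_four, Matrix.cons_val', Matrix.cons_val_zero,
      Matrix.cons_val_one, Matrix.head_cons, Matrix.empty_val', Matrix.cons_val_fin_one,
      Matrix.head_fin_const, Matrix.cons_val_two, Matrix.tail_cons, Matrix.cons_val_three,
      Matrix.of_apply, mul_zero, zero_mul, add_zero, zero_add, neg_zero, mul_neg, neg_neg,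
      ← hK, ← hα]
    ring
  have h2 : (∑ μ : Fin 4, ∑ ν : Fin 4,
          kerr M a x μ ν * j6 M a u₀ C gtil x μ * j6 M a u₀ C gtil x ν)
        = u₀ ^ 2 * (deriv gtil (x 2)) ^ 2 /
            ((gtil (x 2) ^ 2 + C ^ 2) * Del M a x * rho2 a x * Real.sin (x 2) ^ 2) := by
    have hα2 : α ^ 2 = gtil (x 2) ^ 2 / (Del M a x ^ 2 * (C ^ 2 + gtil (x 2) ^ 2)) := by
      rw [hα, div_pow, mul_pow, hS2]
    rw [hsum, hT, hα2, hK]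
    field_simp
    ring
  refine ⟨h1, fun hu => ?_, h2, ?_⟩
  · rw [h1]
    apply div_neg_of_neg_of_pos
    · have : 0 < u₀ ^ 2 := by positivity
      linarith
    · positivity
  · rw [h2]; positivity
end
end
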